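/- Let Δ be an oriented n-dimensional pseudomanifold on d vertices. After rescaling the variables y_σ by suitable signs determined by the orientation of Δ (choosing the oriented basis of Koszul cycles to agree with the orientation of Δ), the specialization J(Δ) of J_{d−n−1} equals the ideal generated by the binomials x_i y_σ − x_j y_τ over all pairs of facets σ, τ ∈ Δ_n and vertices i ∈ σ, j ∈ τ with σ∖{i} = τ∖{j}. -/

import Mathlib

open Finset

/-- The Koszul/simplicial sign of the vertex `i` inside the subset `s`: `(−1)^p` where
`p` is the number of elements of `s` strictly smaller than `i`. -/
def simpSgn {d : ℕ} (s : Finset (Fin d)) (i : Fin d) : ℤ := (-1) ^ (s.filter (· < i)).card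

/-- An oriented pseudomanifold of dimension `n` on the `d` vertices `{0,…,d−1}`:
a collection of facets, each an `(n+1)`-element subset of the vertices, equipped with
orientations (recorded, relative to the standard orientation coming from the ordering
of the vertices, by a sign `sgn σ = ±1`), such that every `n`-element subset of the
vertices lies in exactly zero or two facets, in the latter case the induced
orientations cancelling, and whose dual graph (a vertex for each facet, an edge when
two facets share an `n`-element subset) is connected. -/
structure OrientedPseudomanifold (n d : ℕ) where
  facets : Finset (Finset (Fin d))
  card_eq : ∀ σ ∈ facets, σ.card = n + 1
  sgn : Finset (Fin d) → ℤ
  sgn_pm : ∀ σ ∈ facets, sgn σ = 1 ∨ sgn σ = -1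
  ridge : ∀ t : Finset (Fin d), t.card = n →
    (facets.filter (fun σ => t ⊆ σ)).card = 0 ∨ (facets.filter (fun σ => t ⊆ σ)).card = 2
  cancel : ∀ t : Finset (Fin d), t.card = n →
    ∑ σ ∈ facets.filter (fun σ => t ⊆ σ), sgn σ * ∑ i ∈ σ \ t, simpSgn σ i = 0
  connected : (SimpleGraph.fromRel (fun (σ τ : {x // x ∈ facets}) =>
    ((σ : Finset (Fin d)) ∩ (τ : Finset (Fin d))).card = n)).Connected



open MvPolynomial

noncomputable section

variable {n d : ℕ} (k : Type*) [Field k] (Δ : OrientedPseudomanifold n d)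

/-- The variables of the ring `S = k[x₁,…,x_d, y_σ (σ ∈ Δ_n)]`. -/
abbrev PMVars (Δ : OrientedPseudomanifold n d) : Type := Fin d ⊕ {x // x ∈ Δ.facets}

/-- The multidegree (weight) of a variable: `deg x_i = e_i`,
`deg y_σ = wt(σ) = e_0 − Σ_{j∈σ} e_j`, in `ℤ^{d+1}` (coordinate `0` is `e_0`, and
coordinate `i.succ` is `e_i`). -/
def wtv : PMVars Δ → (Fin (d + 1) →₀ ℤ) :=
  Sum.elim (fun i => Finsupp.single i.succ 1)
    (fun σ => Finsupp.single 0 1 - ∑ j ∈ (σ : Finset (Fin d)), Finsupp.single j.succ 1)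

/-- `e₀ ∈ ℤ^{d+1}`. -/
def e0 (d : ℕ) : Fin (d + 1) →₀ ℤ := Finsupp.single 0 1

/-- The toric ideal `I_𝒜 ⊆ S` of the point configuration
`𝒜 = {e_1,…,e_d} ∪ {wt(σ) : σ ∈ Δ_n}`: the kernel of the `k`-algebra map to the
Laurent polynomial ring sending each variable to the monomial with exponent its
weight. -/
def toricIdealPM : Ideal (MvPolynomial (PMVars Δ) k) :=
  RingHom.ker (MvPolynomial.aeval (fun v =>
    (AddMonoidAlgebra.single (wtv Δ v) 1 : AddMonoidAlgebra k (Fin (d + 1) →₀ ℤ)))).toRingHom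

/-- The binomial ideal `J(Δ)`, generated by the binomials `x_i y_σ − x_j y_τ` over all
pairs of facets `σ, τ` and vertices `i ∈ σ`, `j ∈ τ` with `σ∖{i} = τ∖{j}`. -/
def JofPM : Ideal (MvPolynomial (PMVars Δ) k) :=
  Ideal.span {p | ∃ (σ τ : {x // x ∈ Δ.facets}) (i j : Fin d),
    i ∈ (σ : Finset (Fin d)) ∧ j ∈ (τ : Finset (Fin d)) ∧
    (σ : Finset (Fin d)).erase i = (τ : Finset (Fin d)).erase j ∧
    p = X (Sum.inl i) * X (Sum.inr σ) - X (Sum.inl j) * X (Sum.inr τ)}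

/-- The product of the `x`-variables. -/
def xProd : MvPolynomial (PMVars Δ) k := ∏ i : Fin d, X (Sum.inl i)

/-- `J_Δ = J(Δ) : (x₁⋯x_d)^∞`, the saturation of `J(Δ)` at the product of the
`x`-variables. -/
def JsatPM : Ideal (MvPolynomial (PMVars Δ) k) :=
  ⨆ m : ℕ, Submodule.colon (JofPM k Δ) (Ideal.span {xProd k Δ ^ m})

/-- The defining ideal `L_Δ` of the Rees algebra of the Stanley–Reisner ideal of the
Alexander dual of `Δ`: the kernel of the map `S → k[x₁,…,x_d,t]`, `x_i ↦ x_i`,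
`y_σ ↦ t·∏_{i∉σ} x_i` (the extra variable `t` is `X none`). -/
def LofPM : Ideal (MvPolynomial (PMVars Δ) k) :=
  RingHom.ker (MvPolynomial.aeval (Sum.elim
    (fun i => (X (some i) : MvPolynomial (Option (Fin d)) k))
    (fun (σ : {x // x ∈ Δ.facets}) => X none * ∏ i ∈ (σ : Finset (Fin d))ᶜ, X (some i)))).toRingHom

/-- The faces of the simplicial complex `Δ_m(𝒜)` (for `m = e₀`), per Hochster's
formula: subsets `I` of the point configuration `𝒜` (indexed by the variables) with
`e₀ − Σ_{a ∈ I} a` in the affine semigroup `ℕ𝒜`. -/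
def facesDeltaE0 : Set (Finset (PMVars Δ)) :=
  {I | (e0 d - ∑ v ∈ I, wtv Δ v) ∈ AddSubmonoid.closure (Set.range (wtv Δ))}

/-- The faces of `Δ`, regarded as the simplicial complex generated by its facets. -/
def facesPM (Δ : OrientedPseudomanifold n d) : Set (Finset (Fin d)) :=
  {t | ∃ σ ∈ Δ.facets, t ⊆ σ}

/-- The geometric realization of an abstract simplicial complex with (finite) vertex
set `V` and face set `K`, as a subspace of `V → ℝ`. -/
def realization (V : Type*) [Fintype V] (K : Set (Finset V)) : Set (V → ℝ) :=
  {f | (∀ v, 0 ≤ f v) ∧ (∑ v, f v = 1) ∧ ∃ s ∈ K, ∀ v, f v ≠ 0 → v ∈ s}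

end



/-!
STATEMENT 8: Let `Δ` be an oriented `n`-dimensional pseudomanifold on `d` vertices.
The ideal `J_i` (for `i = d−n−1`) lives in `k[x₁,…,x_d, y_J (|J| = d−n−1)]` and is
generated by the Koszul elements `z_I = Σ_{j∈I} (−1)^{pos(j,I)+1} x_j y_{I∖j}` over
the `(d−n)`-element subsets `I`.  After rescaling the variables `y_σ` by suitable
signs `ε(σ) = ±1` determined by the orientation of `Δ`, the specialization `J(Δ)` of
`J_{d−n−1}` — obtained by sending `y_J` to `ε(σ)·y_σ` if the complement `σ` of `J` is
a facet of `Δ` and to `0` otherwise (and relabeling `y_J` as `y_σ`) — equals the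
ideal generated by the binomials `x_i y_σ − x_j y_τ` over facets `σ, τ` and vertices
`i ∈ σ`, `j ∈ τ` with `σ∖{i} = τ∖{j}`.
-/

noncomputable section

variable {n d : ℕ} (k : Type*) [Field k] (Δ : OrientedPseudomanifold n d)

/-- The polynomial ring `k[x₁,…,x_d, y_J (|J| = d−n−1)]`, the ambient ring of the
presentation ideal `J_{d−n−1}` of the symmetric algebra of the `(d−n−2)`-nd Koszul
cycles. -/
abbrev BigRing (k : Type*) [Field k] (n d : ℕ) : Type _ :=
  MvPolynomial (Fin d ⊕ {J : Finset (Fin d) // J.card = d - (n + 1)}) k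

/-- The `y`-variable `y_J` of the big ring (zero if `J` does not have the right
cardinality). -/
def yBig (J : Finset (Fin d)) : BigRing k n d :=
  if h : J.card = d - (n + 1) then X (Sum.inr ⟨J, h⟩) else 0

/-- The ideal `J_{d−n−1}`, generated by the elements
`z_I = Σ_{j∈I} (−1)^{pos(j,I)+1} x_j y_{I∖j}` over the subsets `I` of cardinality
`d−n`. -/
def JBigIdeal : Ideal (BigRing k n d) :=
  Ideal.span {p | ∃ I : Finset (Fin d), I.card = d - n ∧
    p = ∑ j ∈ I, simpSgn I j • (X (Sum.inl j) * yBig k (I.erase j))}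

/-- The specialization map determined by signs `ε`: it fixes the `x`-variables, sends
`y_J` to `ε(σ) · y_σ` when the complement `σ = {1,…,d}∖J` is a facet of `Δ`, and
sends `y_J` to `0` otherwise. -/
def specializePM (ε : {x // x ∈ Δ.facets} → ℤ) :
    BigRing k n d →ₐ[k] MvPolynomial (PMVars Δ) k :=
  MvPolynomial.aeval (Sum.elim (fun i => X (Sum.inl i))
    (fun J => if h : (J : Finset (Fin d))ᶜ ∈ Δ.facets then
        ε ⟨(J : Finset (Fin d))ᶜ, h⟩ • X (Sum.inr ⟨(J : Finset (Fin d))ᶜ, h⟩) else 0))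

/-- The sign rescaling: `ε(σ) = sgn(σ) · (−1)^{Σ_{v∈σ} v}`. -/
def epsPM (Δ : OrientedPseudomanifold n d) (σ : {x // x ∈ Δ.facets}) : ℤ :=
  Δ.sgn (σ : Finset (Fin d)) * (-1) ^ (∑ v ∈ (σ : Finset (Fin d)), (v : ℕ))

lemma neg_one_pow_mul_self (m : ℕ) : ((-1 : ℤ)) ^ m * (-1) ^ m = 1 := by
  rw [← pow_add]; exact Even.neg_one_pow ⟨m, rfl⟩

lemma simpSgn_mul_self (s : Finset (Fin d)) (i : Fin d) : simpSgn s i * simpSgn s i = 1 :=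
  neg_one_pow_mul_self _

lemma epsPM_mul_self (σ : {x // x ∈ Δ.facets}) : epsPM Δ σ * epsPM Δ σ = 1 := by
  have hp := neg_one_pow_mul_self (∑ v ∈ (σ : Finset (Fin d)), (v : ℕ))
  rcases Δ.sgn_pm _ σ.2 with h | h <;> rw [epsPM, h] <;> linear_combination hp

lemma epsPM_pm (σ : {x // x ∈ Δ.facets}) : epsPM Δ σ = 1 ∨ epsPM Δ σ = -1 := by
  rcases Δ.sgn_pm _ σ.2 with h | h <;>
    rcases neg_one_pow_eq_or ℤ (∑ v ∈ (σ : Finset (Fin d)), (v : ℕ)) with h' | h' <;>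
      rw [epsPM, h, h'] <;> norm_num

lemma simpSgn_insert_self (t : Finset (Fin d)) (i : Fin d) :
    simpSgn (insert i t) i = simpSgn t i := by
  unfold simpSgn
  rw [Finset.filter_insert, if_neg (lt_irrefl i)]

lemma simpSgn_compl_mul (t : Finset (Fin d)) (i : Fin d) :
    simpSgn tᶜ i * simpSgn t i = (-1) ^ (i : ℕ) := by
  unfold simpSgn
  rw [← pow_add]
  congr 1
  have hdisj : Disjoint (tᶜ.filter (· < i)) (t.filter (· < i)) :=
    Finset.disjoint_filter_filter disjoint_compl_left
  have hunion : tᶜ.filter (· < i) ∪ t.filter (· < i) = Finset.univ.filter (· < i) := by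
    rw [← Finset.filter_union]
    congr 1
    ext a; by_cases h : a ∈ t <;> simp [h]
  have huniv : (Finset.univ.filter (· < i)).card = (i : ℕ) := by
    rw [show Finset.univ.filter (· < i) = Finset.Iio i from by ext a; simp]
    exact Fin.card_Iio i
  rw [← huniv, ← hunion, Finset.card_union_of_disjoint hdisj]

lemma specializePM_X_inl (ε : {x // x ∈ Δ.facets} → ℤ) (i : Fin d) :
    specializePM k Δ ε (X (Sum.inl i)) = X (Sum.inl i) := by
  simp [specializePM]

lemma specializePM_yBig (ε : {x // x ∈ Δ.facets} → ℤ) (J : Finset (Fin d))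
    (hJ : J.card = d - (n + 1)) :
    specializePM k Δ ε (yBig k J) =
      if h : Jᶜ ∈ Δ.facets then ε ⟨Jᶜ, h⟩ • X (Sum.inr ⟨Jᶜ, h⟩) else 0 := by
  rw [yBig, dif_pos hJ]
  simp [specializePM]

lemma spec_z (I : Finset (Fin d)) (hI : I.card = d - n) :
    specializePM k Δ (epsPM Δ) (∑ a ∈ I, simpSgn I a • (X (Sum.inl a) * yBig k (I.erase a)))
      = ∑ a ∈ I, if h : insert a Iᶜ ∈ Δ.facets then
          (simpSgn I a * epsPM Δ ⟨insert a Iᶜ, h⟩) •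
            (X (Sum.inl a) * X (Sum.inr ⟨insert a Iᶜ, h⟩)) else 0 := by
  rw [map_sum]
  refine Finset.sum_congr rfl fun a ha => ?_
  have hcard : (I.erase a).card = d - (n + 1) := by
    rw [Finset.card_erase_of_mem ha, hI, Nat.sub_sub]
  rw [map_zsmul, map_mul, specializePM_X_inl, specializePM_yBig k Δ _ _ hcard]
  simp only [Finset.compl_erase]
  split_ifs with h
  · rw [mul_smul_comm, smul_smul]
  · rw [mul_zero, smul_zero]

lemma spec_z_pair (I t : Finset (Fin d)) (hIt : Iᶜ = t) (hI : I.card = d - n)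
    (ht : t.card = n) {i j : Fin d} (hi : i ∈ I) (hj : j ∈ I) (hij : i ≠ j)
    (hσ : insert i t ∈ Δ.facets) (hτ : insert j t ∈ Δ.facets)
    (hfil : Δ.facets.filter (fun ρ => t ⊆ ρ) = {insert i t, insert j t}) :
    specializePM k Δ (epsPM Δ) (∑ a ∈ I, simpSgn I a • (X (Sum.inl a) * yBig k (I.erase a)))
      = (simpSgn I i * epsPM Δ ⟨insert i t, hσ⟩) •
          (X (Sum.inl i) * X (Sum.inr ⟨insert i t, hσ⟩)
            - X (Sum.inl j) * X (Sum.inr ⟨insert j t, hτ⟩)) := by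
  subst hIt
  rw [spec_z k Δ I hI]
  have hic : i ∉ Iᶜ := by simp [hi]
  have hjc : j ∉ Iᶜ := by simp [hj]
  have hne : insert i Iᶜ ≠ insert j Iᶜ := by
    intro h
    rcases Finset.mem_insert.1 (h ▸ Finset.mem_insert_self i Iᶜ) with h' | h'
    · exact hij h'
    · exact hic h'
  have hsub : ({i, j} : Finset (Fin d)) ⊆ I := by
    intro a ha
    rcases Finset.mem_insert.1 ha with h | h
    · exact h ▸ hi
    · exact (Finset.mem_singleton.1 h) ▸ hj
  refine Eq.trans (Finset.sum_subset hsub fun a ha hna => ?_).symm ?_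
  · -- terms outside {i, j} vanish
    rw [dif_neg]
    intro hmem
    have hmem' : insert a Iᶜ ∈ ({insert i Iᶜ, insert j Iᶜ} : Finset (Finset (Fin d))) := by
      rw [← hfil, Finset.mem_filter]
      exact ⟨hmem, Finset.subset_insert _ _⟩
    have hac : a ∉ Iᶜ := by simp [ha]
    have haij : a = i ∨ a = j := by
      rcases Finset.mem_insert.1 hmem' with h | h
      · rcases Finset.mem_insert.1 (h ▸ Finset.mem_insert_self a Iᶜ) with h' | h'
        · exact Or.inl h'
        · exact absurd h' hac
      · rw [Finset.mem_singleton] at h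
        rcases Finset.mem_insert.1 (h ▸ Finset.mem_insert_self a Iᶜ) with h' | h'
        · exact Or.inr h'
        · exact absurd h' hac
    simp only [Finset.mem_insert, Finset.mem_singleton, not_or] at hna
    rcases haij with h | h
    · exact hna.1 h
    · exact hna.2 h
  · rw [Finset.sum_pair hij, dif_pos hσ, dif_pos hτ]
    -- the sign computation
    have h2i : simpSgn I i * simpSgn Iᶜ i = (-1) ^ (i : ℕ) := by
      have h := simpSgn_compl_mul Iᶜ i
      rwa [compl_compl] at h
    have h2j : simpSgn I j * simpSgn Iᶜ j = (-1) ^ (j : ℕ) := by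
      have h := simpSgn_compl_mul Iᶜ j
      rwa [compl_compl] at h
    have hc := Δ.cancel Iᶜ ht
    rw [hfil, Finset.sum_pair hne] at hc
    have hsd1 : insert i Iᶜ \ Iᶜ = {i} := by
      rw [Finset.insert_sdiff_of_notMem _ hic, Finset.sdiff_self]
      simp
    have hsd2 : insert j Iᶜ \ Iᶜ = {j} := by
      rw [Finset.insert_sdiff_of_notMem _ hjc, Finset.sdiff_self]
      simp
    rw [hsd1, hsd2, Finset.sum_singleton, Finset.sum_singleton,
      simpSgn_insert_self, simpSgn_insert_self] at hc
    have hAA := simpSgn_mul_self I i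
    have hCC := simpSgn_mul_self I j
    have hepsi : epsPM Δ ⟨insert i Iᶜ, hσ⟩
        = Δ.sgn (insert i Iᶜ) * ((-1) ^ (i : ℕ) * (-1) ^ (∑ v ∈ Iᶜ, (v : ℕ))) := by
      rw [epsPM]
      dsimp only
      rw [Finset.sum_insert hic, pow_add]
    have hepsj : epsPM Δ ⟨insert j Iᶜ, hτ⟩
        = Δ.sgn (insert j Iᶜ) * ((-1) ^ (j : ℕ) * (-1) ^ (∑ v ∈ Iᶜ, (v : ℕ))) := by
      rw [epsPM]
      dsimp only
      rw [Finset.sum_insert hjc, pow_add]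
    have hkey : simpSgn I j * epsPM Δ ⟨insert j Iᶜ, hτ⟩
        = -(simpSgn I i * epsPM Δ ⟨insert i Iᶜ, hσ⟩) := by
      rw [hepsi, hepsj]
      linear_combination
        (-(simpSgn I j * Δ.sgn (insert j Iᶜ) * (-1 : ℤ) ^ (∑ v ∈ Iᶜ, (v : ℕ)))) * h2j +
        (-(simpSgn I i * Δ.sgn (insert i Iᶜ) * (-1 : ℤ) ^ (∑ v ∈ Iᶜ, (v : ℕ)))) * h2i +
        (Δ.sgn (insert j Iᶜ) * simpSgn Iᶜ j * (-1 : ℤ) ^ (∑ v ∈ Iᶜ, (v : ℕ))) * hCC +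
        (Δ.sgn (insert i Iᶜ) * simpSgn Iᶜ i * (-1 : ℤ) ^ (∑ v ∈ Iᶜ, (v : ℕ))) * hAA +
        ((-1 : ℤ) ^ (∑ v ∈ Iᶜ, (v : ℕ))) * hc
    rw [hkey, neg_smul, smul_sub, sub_eq_add_neg]

theorem specialization_of_JBig_eq_binomial_ideal :
    ∃ ε : {x // x ∈ Δ.facets} → ℤ, (∀ σ, ε σ = 1 ∨ ε σ = -1) ∧
      Ideal.map (specializePM k Δ ε) (JBigIdeal (n := n) (d := d) k) = JofPM k Δ := by
  classical
  refine ⟨epsPM Δ, epsPM_pm Δ, ?_⟩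
  have hnd : n + 1 ≤ d := by
    obtain ⟨σ₀⟩ := Δ.connected.nonempty
    calc n + 1 = (σ₀ : Finset (Fin d)).card := (Δ.card_eq _ σ₀.2).symm
      _ ≤ Fintype.card (Fin d) := Finset.card_le_univ _
      _ = d := Fintype.card_fin d
  apply le_antisymm
  · -- map of J_big ⊆ J(Δ)
    rw [JBigIdeal, Ideal.map_span]
    refine Ideal.span_le.2 ?_
    rintro _ ⟨p, ⟨I, hI, rfl⟩, rfl⟩
    have htI : Iᶜ.card = n := by
      rw [Finset.card_compl, Fintype.card_fin, hI]
      omega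
    rcases Δ.ridge Iᶜ htI with h0 | h2
    · -- no facet contains the ridge: the image is zero
      rw [Finset.card_eq_zero] at h0
      rw [spec_z k Δ I hI]
      refine Ideal.sum_mem _ fun a ha => ?_
      rw [dif_neg]
      · exact (JofPM k Δ).zero_mem
      · intro hmem
        have : insert a Iᶜ ∈ Δ.facets.filter (fun σ => Iᶜ ⊆ σ) :=
          Finset.mem_filter.2 ⟨hmem, Finset.subset_insert _ _⟩
        rw [h0] at this
        exact absurd this (Finset.notMem_empty _)
    · -- exactly two facets contain the ridge
      obtain ⟨σ, τ, hστ, hpair⟩ := Finset.card_eq_two.1 h2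
      have hσf : σ ∈ Δ.facets ∧ Iᶜ ⊆ σ := by
        have : σ ∈ Δ.facets.filter (fun σ => Iᶜ ⊆ σ) := by
          rw [hpair]; exact Finset.mem_insert_self _ _
        exact Finset.mem_filter.1 this
      have hτf : τ ∈ Δ.facets ∧ Iᶜ ⊆ τ := by
        have : τ ∈ Δ.facets.filter (fun σ => Iᶜ ⊆ σ) := by
          rw [hpair]
          exact Finset.mem_insert.2 (Or.inr (Finset.mem_singleton_self _))
        exact Finset.mem_filter.1 this
      have hcσ : (σ \ Iᶜ).card = 1 := by
        rw [Finset.card_sdiff_of_subset hσf.2, Δ.card_eq σ hσf.1, htI]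
        omega
      have hcτ : (τ \ Iᶜ).card = 1 := by
        rw [Finset.card_sdiff_of_subset hτf.2, Δ.card_eq τ hτf.1, htI]
        omega
      obtain ⟨i, hiσ⟩ := Finset.card_eq_one.1 hcσ
      obtain ⟨j, hjτ⟩ := Finset.card_eq_one.1 hcτ
      have hσeq : σ = insert i Iᶜ := by
        have h1 := Finset.union_sdiff_of_subset hσf.2
        rw [hiσ, Finset.union_comm] at h1
        rw [Finset.insert_eq]
        exact h1.symm
      have hτeq : τ = insert j Iᶜ := by
        have h1 := Finset.union_sdiff_of_subset hτf.2
        rw [hjτ, Finset.union_comm] at h1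
        rw [Finset.insert_eq]
        exact h1.symm
      have hiI : i ∈ I := by
        have h1 : i ∈ σ \ Iᶜ := hiσ ▸ Finset.mem_singleton_self i
        simpa using (Finset.mem_sdiff.1 h1).2
      have hjI : j ∈ I := by
        have h1 : j ∈ τ \ Iᶜ := hjτ ▸ Finset.mem_singleton_self j
        simpa using (Finset.mem_sdiff.1 h1).2
      have hij : i ≠ j := by
        intro h
        apply hστ
        rw [hσeq, hτeq, h]
      have hσ' : insert i Iᶜ ∈ Δ.facets := hσeq ▸ hσf.1
      have hτ' : insert j Iᶜ ∈ Δ.facets := hτeq ▸ hτf.1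
      have hfil : Δ.facets.filter (fun σ => Iᶜ ⊆ σ) = {insert i Iᶜ, insert j Iᶜ} := by
        rw [hpair, hσeq, hτeq]
      rw [spec_z_pair k Δ I Iᶜ rfl hI htI hiI hjI hij hσ' hτ' hfil]
      have hb : (X (Sum.inl i) * X (Sum.inr ⟨insert i Iᶜ, hσ'⟩)
          - X (Sum.inl j) * X (Sum.inr ⟨insert j Iᶜ, hτ'⟩) : MvPolynomial (PMVars Δ) k)
          ∈ JofPM k Δ := by
        refine Ideal.subset_span
          ⟨⟨insert i Iᶜ, hσ'⟩, ⟨insert j Iᶜ, hτ'⟩, i, j, ?_, ?_, ?_, rfl⟩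
        · exact Finset.mem_insert_self _ _
        · exact Finset.mem_insert_self _ _
        · show (insert i Iᶜ).erase i = (insert j Iᶜ).erase j
          rw [Finset.erase_insert (by simp [hiI]), Finset.erase_insert (by simp [hjI])]
      exact Submodule.smul_of_tower_mem _ _ hb
  · -- J(Δ) ⊆ map of J_big
    rw [JofPM]
    refine Ideal.span_le.2 ?_
    rintro p ⟨σ, τ, i, j, hiσ, hjτ, herase, rfl⟩
    by_cases hστ : σ = τ
    · subst hστ
      have hijeq : i = j := by
        by_contra hne
        have h1 : i ∈ (σ : Finset (Fin d)).erase j := Finset.mem_erase.2 ⟨hne, hiσ⟩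
        rw [← herase] at h1
        exact (Finset.notMem_erase i _) h1
      subst hijeq
      simp only [sub_self]
      exact Submodule.zero_mem _
    · have hvne : (σ : Finset (Fin d)) ≠ (τ : Finset (Fin d)) := fun h => hστ (Subtype.ext h)
      have hij : i ≠ j := by
        intro h
        subst h
        apply hστ
        apply Subtype.ext
        rw [← Finset.insert_erase hiσ, ← Finset.insert_erase hjτ, herase]
      have hit : i ∉ (σ : Finset (Fin d)).erase i := Finset.notMem_erase i _
      have hjt : j ∉ (σ : Finset (Fin d)).erase i := by
        rw [herase]; exact Finset.notMem_erase j _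
      have ht : ((σ : Finset (Fin d)).erase i).card = n := by
        rw [Finset.card_erase_of_mem hiσ, Δ.card_eq _ σ.2]
        omega
      have hσeq : (σ : Finset (Fin d)) = insert i ((σ : Finset (Fin d)).erase i) :=
        (Finset.insert_erase hiσ).symm
      have hτeq : (τ : Finset (Fin d)) = insert j ((σ : Finset (Fin d)).erase i) := by
        rw [herase]
        exact (Finset.insert_erase hjτ).symm
      have hmemσ : (σ : Finset (Fin d)) ∈
          Δ.facets.filter (fun ρ => (σ : Finset (Fin d)).erase i ⊆ ρ) :=
        Finset.mem_filter.2 ⟨σ.2, Finset.erase_subset _ _⟩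
      have hmemτ : (τ : Finset (Fin d)) ∈
          Δ.facets.filter (fun ρ => (σ : Finset (Fin d)).erase i ⊆ ρ) :=
        Finset.mem_filter.2 ⟨τ.2, by rw [herase]; exact Finset.erase_subset _ _⟩
      have h2 : (Δ.facets.filter (fun ρ => (σ : Finset (Fin d)).erase i ⊆ ρ)).card = 2 := by
        rcases Δ.ridge _ ht with h0 | h2
        · rw [Finset.card_eq_zero] at h0
          rw [h0] at hmemσ
          exact absurd hmemσ (Finset.notMem_empty _)
        · exact h2
      have hsub : ({(σ : Finset (Fin d)), (τ : Finset (Fin d))} : Finset (Finset (Fin d)))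
          ⊆ Δ.facets.filter (fun ρ => (σ : Finset (Fin d)).erase i ⊆ ρ) := by
        intro ρ hρ
        rcases Finset.mem_insert.1 hρ with h | h
        · exact h ▸ hmemσ
        · exact (Finset.mem_singleton.1 h) ▸ hmemτ
      have hfil : Δ.facets.filter (fun ρ => (σ : Finset (Fin d)).erase i ⊆ ρ)
          = {(σ : Finset (Fin d)), (τ : Finset (Fin d))} :=
        (Finset.eq_of_subset_of_card_le hsub
          (by rw [h2, Finset.card_pair hvne])).symm
      have hσ' : insert i ((σ : Finset (Fin d)).erase i) ∈ Δ.facets := by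
        rw [← hσeq]; exact σ.2
      have hτ' : insert j ((σ : Finset (Fin d)).erase i) ∈ Δ.facets := by
        rw [← hτeq]; exact τ.2
      have hfil' : Δ.facets.filter (fun ρ => (σ : Finset (Fin d)).erase i ⊆ ρ)
          = {insert i ((σ : Finset (Fin d)).erase i),
             insert j ((σ : Finset (Fin d)).erase i)} := by
        rw [← hσeq, ← hτeq]
        exact hfil
      have hI : (((σ : Finset (Fin d)).erase i)ᶜ).card = d - n := by
        rw [Finset.card_compl, Fintype.card_fin, ht]
      have hIt : (((σ : Finset (Fin d)).erase i)ᶜ)ᶜ = (σ : Finset (Fin d)).erase i :=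
        compl_compl _
      have hi' : i ∈ ((σ : Finset (Fin d)).erase i)ᶜ := Finset.mem_compl.2 hit
      have hj' : j ∈ ((σ : Finset (Fin d)).erase i)ᶜ := Finset.mem_compl.2 hjt
      have hspec := spec_z_pair k Δ _ _ hIt hI ht hi' hj' hij hσ' hτ' hfil'
      have hsσ : (⟨insert i ((σ : Finset (Fin d)).erase i), hσ'⟩ : {x // x ∈ Δ.facets}) = σ :=
        Subtype.ext hσeq.symm
      have hsτ : (⟨insert j ((σ : Finset (Fin d)).erase i), hτ'⟩ : {x // x ∈ Δ.facets}) = τ :=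
        Subtype.ext hτeq.symm
      rw [hsσ, hsτ] at hspec
      have hzmem : (∑ a ∈ ((σ : Finset (Fin d)).erase i)ᶜ,
          simpSgn (((σ : Finset (Fin d)).erase i)ᶜ) a •
            (X (Sum.inl a) * yBig k ((((σ : Finset (Fin d)).erase i)ᶜ).erase a)))
          ∈ JBigIdeal (n := n) (d := d) k :=
        Ideal.subset_span ⟨_, hI, rfl⟩
      have hmap := Ideal.mem_map_of_mem (specializePM k Δ (epsPM Δ)) hzmem
      rw [hspec] at hmap
      have hsq : (simpSgn (((σ : Finset (Fin d)).erase i)ᶜ) i * epsPM Δ σ)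
          * (simpSgn (((σ : Finset (Fin d)).erase i)ᶜ) i * epsPM Δ σ) = 1 := by
        have h1 := simpSgn_mul_self (((σ : Finset (Fin d)).erase i)ᶜ) i
        have h2 := epsPM_mul_self Δ σ
        linear_combination (epsPM Δ σ * epsPM Δ σ) * h1 + h2
      have hfinal := Submodule.smul_of_tower_mem
        (Ideal.map (specializePM k Δ (epsPM Δ)) (JBigIdeal (n := n) (d := d) k))
        (simpSgn (((σ : Finset (Fin d)).erase i)ᶜ) i * epsPM Δ σ) hmap
      rw [smul_smul, hsq, one_smul] at hfinal
      exact hfinal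

end
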